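/- Let TA be a threshold automaton and let σ, σ' be configurations of TA. There exists a steady schedule τ applicable to σ with τ(σ) = σ' if and only if some assignment y: R → ℕ witnesses steady reachability from σ to σ'. -/

import Mathlib

/-!
Threshold automata (Konnov, Veith, Widder), following
"Complexity of Verification and Synthesis of Threshold Automata".
-/

/-- A threshold guard `x ⋈ a₀ + a₁·p₁ + … + a_{|Π|}·p_{|Π|}` over shared variables `V` and
parameters `P`.  `isRise = true` means a *rise* guard `x ≥ …`, and `isRise = false` means a
*fall* guard `x < …`. -/
structure TGuard (V P : Type) where
  var : V
  isRise : Bool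
  a0 : ℚ
  coef : P → ℚ

/-- A configuration `σ = (κ, g, p)`: numbers of processes in each location, values of the
shared variables, and values of the parameters. -/
structure Config (L V P : Type) where
  κ : L → ℕ
  g : V → ℕ
  p : P → ℕ

/-- A rule of a threshold automaton: source and target locations, a guard that is a
(finite) conjunction of threshold guards, and an update `V → {0,1}`. -/
structure TRule (L V P : Type) where
  src : L
  dst : L
  guard : List (TGuard V P)
  upd : V → ℕ
  upd_le_one : ∀ v, upd v ≤ 1

/-- A threshold automaton `(L, I, Γ, R)` together with its environment `(Π, RC, N)`.
`L`, `V`, `P` are the types of locations, shared variables and parameters, and `R` is the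
index type of rules. -/
structure TA (L V P R : Type) where
  initial : Set L
  initial_nonempty : initial.Nonempty
  rc : Set (P → ℕ)
  N : (P → ℕ) → ℕ
  rule : R → TRule L V P

variable {L V P R : Type}

/-- Satisfaction of a threshold guard by values `g` of the shared variables and `p` of the
parameters. -/
def TGuard.holds [Fintype P] (φ : TGuard V P) (g : V → ℕ) (p : P → ℕ) : Prop :=
  if φ.isRise then φ.a0 + ∑ i : P, φ.coef i * (p i : ℚ) ≤ (g φ.var : ℚ)
  else (g φ.var : ℚ) < φ.a0 + ∑ i : P, φ.coef i * (p i : ℚ)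

/-- A configuration enables a rule. -/
def TRule.enabledAt [Fintype P] (r : TRule L V P) (σ : Config L V P) : Prop :=
  0 < σ.κ r.src ∧ ∀ φ ∈ r.guard, φ.holds σ.g σ.p

/-- The result of firing a rule at a configuration. -/
def TRule.fire [DecidableEq L] (r : TRule L V P) (σ : Config L V P) : Config L V P where
  κ := fun ℓ => σ.κ ℓ + (if ℓ = r.dst then 1 else 0) - (if ℓ = r.src then 1 else 0)
  g := fun v => σ.g v + r.upd v
  p := σ.p

namespace TA

variable [Fintype P] [DecidableEq L]

/-- `σ` is a configuration of `ta`: the parameters satisfy the resilience condition and the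
total number of processes is `N(p)`. -/
def validConfig [Fintype L] (ta : TA L V P R) (σ : Config L V P) : Prop :=
  σ.p ∈ ta.rc ∧ ∑ ℓ : L, σ.κ ℓ = ta.N σ.p

/-- Initial configurations. -/
def isInitial [Fintype L] (ta : TA L V P R) (σ : Config L V P) : Prop :=
  ta.validConfig σ ∧ (∀ ℓ, ℓ ∉ ta.initial → σ.κ ℓ = 0) ∧ ∀ v, σ.g v = 0

/-- A schedule (finite sequence of rules) is applicable to a configuration. -/
def applicable (ta : TA L V P R) : Config L V P → List R → Prop
  | _, [] => True
  | σ, r :: τ => (ta.rule r).enabledAt σ ∧ ta.applicable ((ta.rule r).fire σ) τ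

/-- The configuration `τ(σ)` resulting from applying a schedule. -/
def apply (ta : TA L V P R) : Config L V P → List R → Config L V P
  | σ, [] => σ
  | σ, r :: τ => ta.apply ((ta.rule r).fire σ) τ

/-- The configurations visited by the path from `σ` along `τ` (including both endpoints). -/
def visited (ta : TA L V P R) : Config L V P → List R → List (Config L V P)
  | σ, [] => [σ]
  | σ, r :: τ => σ :: ta.visited ((ta.rule r).fire σ) τ

/-- Reachability `σ →* σ'`. -/
def reaches (ta : TA L V P R) (σ σ' : Config L V P) : Prop :=
  ∃ τ : List R, ta.applicable σ τ ∧ ta.apply σ τ = σ'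

/-- The set of all threshold guards occurring in rules of the automaton. -/
def guards (ta : TA L V P R) : Set (TGuard V P) :=
  {φ | ∃ r : R, φ ∈ (ta.rule r).guard}

/-- The context `ω(σ)`: rise guards of `ta` that are true in `σ` together with fall guards
of `ta` that are false in `σ`. -/
def context (ta : TA L V P R) (σ : Config L V P) : Set (TGuard V P) :=
  {φ | φ ∈ ta.guards ∧ if φ.isRise then φ.holds σ.g σ.p else ¬ φ.holds σ.g σ.p}

/-- A schedule applicable at `σ` is steady if all configurations visited by the
corresponding path have the same context. -/
def steady (ta : TA L V P R) (σ : Config L V P) (τ : List R) : Prop :=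
  ∀ σ' ∈ ta.visited σ τ, ta.context σ' = ta.context σ

end TA

/-- There is a chain of rules, all fired at least once according to `y`, starting at a
location populated in `σ` and leading to the rule `r`. -/
def TA.chainTo [Fintype P] (ta : TA L V P R) (y : R → ℕ) (σ : Config L V P) (r : R) : Prop :=
  ∃ (c : List R) (hne : c ≠ []),
    (∀ r' ∈ c, 0 < y r') ∧
    0 < σ.κ (ta.rule (c.head hne)).src ∧
    List.Chain' (fun a b => (ta.rule a).dst = (ta.rule b).src) c ∧
    c.getLast hne = r

/-- The assignment `y : R → ℕ` witnesses steady reachability from `σ` to `σ'`. -/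
def TA.witnessesSteady [Fintype P] [DecidableEq L] [Fintype R]
    (ta : TA L V P R) (σ σ' : Config L V P) (y : R → ℕ) : Prop :=
  σ.p = σ'.p ∧
  ta.context σ = ta.context σ' ∧
  (∀ ℓ : L, (σ'.κ ℓ : ℤ) - (σ.κ ℓ : ℤ) =
      (∑ r : R, if (ta.rule r).dst = ℓ then (y r : ℤ) else 0) -
      (∑ r : R, if (ta.rule r).src = ℓ then (y r : ℤ) else 0)) ∧
  (∀ z : V, (σ'.g z : ℤ) - (σ.g z : ℤ) = ∑ r : R, (y r : ℤ) * ((ta.rule r).upd z : ℤ)) ∧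
  (∀ r : R, 0 < y r → ∀ φ ∈ (ta.rule r).guard, φ.holds σ.g σ.p) ∧
  (∀ r : R, 0 < y r → ta.chainTo y σ r)



section SteadyAux

variable [DecidableEq L] [DecidableEq R] (s d : R → L)

/-- Auxiliary reachability predicate: location `ℓ` is reachable from a populated location
via rules with positive count. -/
inductive GoodL (y : R → ℕ) (κ : L → ℕ) : L → Prop
  | base (ℓ : L) : 0 < κ ℓ → GoodL y κ ℓ
  | step (r : R) : GoodL y κ (s r) → 0 < y r → GoodL y κ (d r)

theorem GoodL.mono {y y' : R → ℕ} {κ : L → ℕ} (h : ∀ r, y r ≤ y' r) {ℓ : L}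
    (hg : GoodL s d y κ ℓ) : GoodL s d y' κ ℓ := by
  induction hg with
  | base ℓ h0 => exact .base ℓ h0
  | step r hg hy ih => exact .step r ih (lt_of_lt_of_le hy (h r))

theorem sum_ite_sub [Fintype R] (f : R → L) (e : R) (y : R → ℕ) (hy : 0 < y e) (ℓ : L) :
    (∑ r, if f r = ℓ then ((y r - if r = e then 1 else 0 : ℕ) : ℤ) else 0)
      = (∑ r, if f r = ℓ then (y r : ℤ) else 0) - (if f e = ℓ then 1 else 0) := by
  have h1 : ∀ r : R, (if f r = ℓ then ((y r - if r = e then 1 else 0 : ℕ) : ℤ) else 0)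
      = (if f r = ℓ then (y r : ℤ) else 0)
        - (if f r = ℓ then (if r = e then (1 : ℤ) else 0) else 0) := by
    intro r
    by_cases h2 : r = e
    · subst h2; by_cases h : f r = ℓ <;> simp [h] <;> omega
    · by_cases h : f r = ℓ <;> simp [h, h2]
  rw [Finset.sum_congr rfl (fun r _ => h1 r), Finset.sum_sub_distrib]
  congr 1
  rw [Finset.sum_eq_single e]
  · simp
  · intro b _ hb; simp [hb]
  · intro h; exact absurd (Finset.mem_univ e) h

theorem sum_upd_sub [Fintype R] (u : R → ℤ) (e : R) (y : R → ℕ) (hy : 0 < y e) :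
    (∑ r, ((y r - if r = e then 1 else 0 : ℕ) : ℤ) * u r)
      = (∑ r, (y r : ℤ) * u r) - u e := by
  have h1 : ∀ r : R, ((y r - if r = e then 1 else 0 : ℕ) : ℤ) * u r
      = (y r : ℤ) * u r - (if r = e then (1 : ℤ) else 0) * u r := by
    intro r
    by_cases h2 : r = e
    · subst h2
      have h3 : ((y r - 1 : ℕ) : ℤ) = (y r : ℤ) - 1 := by omega
      simp [h3]; ring
    · simp [h2]
  rw [Finset.sum_congr rfl (fun r _ => h1 r), Finset.sum_sub_distrib]
  congr 1
  rw [Finset.sum_eq_single e]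
  · simp
  · intro b _ hb; simp [hb]
  · intro h; exact absurd (Finset.mem_univ e) h

theorem flow_step [Fintype R] {y : R → ℕ} {κ κ' : L → ℕ} (e : R) (hy : 0 < y e)
    (hκ : 0 < κ (s e))
    (flow : ∀ ℓ, (κ' ℓ : ℤ) - κ ℓ =
      (∑ r, if d r = ℓ then (y r : ℤ) else 0) - ∑ r, if s r = ℓ then (y r : ℤ) else 0) :
    ∀ ℓ, (κ' ℓ : ℤ) -
        ((κ ℓ + (if ℓ = d e then 1 else 0) - (if ℓ = s e then 1 else 0) : ℕ) : ℤ) =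
      (∑ r, if d r = ℓ then ((y r - if r = e then 1 else 0 : ℕ) : ℤ) else 0) -
      ∑ r, if s r = ℓ then ((y r - if r = e then 1 else 0 : ℕ) : ℤ) else 0 := by
  intro ℓ
  rw [sum_ite_sub d e y hy ℓ, sum_ite_sub s e y hy ℓ]
  have hflip1 : (if d e = ℓ then (1 : ℤ) else 0) = (if ℓ = d e then 1 else 0) := by
    by_cases h : ℓ = d e <;> simp [h, eq_comm]
  have hflip2 : (if s e = ℓ then (1 : ℤ) else 0) = (if ℓ = s e then 1 else 0) := by
    by_cases h : ℓ = s e <;> simp [h, eq_comm]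
  have hκcast : ((κ ℓ + (if ℓ = d e then 1 else 0) - (if ℓ = s e then 1 else 0) : ℕ) : ℤ)
      = (κ ℓ : ℤ) + (if ℓ = d e then 1 else 0) - (if ℓ = s e then 1 else 0) := by
    by_cases h2 : ℓ = s e
    · subst h2
      by_cases h1 : s e = d e <;> simp [h1] <;> omega
    · by_cases h1 : ℓ = d e
      · subst h1; simp [h2]
      · simp [h1, h2]
  rw [hflip1, hflip2, hκcast]
  have hf := flow ℓ
  linarith


theorem key_step [Fintype R] [Fintype L] {y : R → ℕ} {κ κ' : L → ℕ}
    (flow : ∀ ℓ, (κ' ℓ : ℤ) - κ ℓ =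
      (∑ r, if d r = ℓ then (y r : ℤ) else 0) - ∑ r, if s r = ℓ then (y r : ℤ) else 0)
    (inv : ∀ r, 0 < y r → GoodL s d y κ (s r))
    {r₀ : R} (hr₀ : 0 < y r₀) :
    ∃ e, 0 < y e ∧ 0 < κ (s e) ∧
      ∀ r, 0 < y r - (if r = e then 1 else 0) →
        GoodL s d (fun r' => y r' - if r' = e then 1 else 0)
          (fun ℓ => κ ℓ + (if ℓ = d e then 1 else 0) - (if ℓ = s e then 1 else 0)) (s r) := by
  classical
  by_contra hcon
  push_neg at hcon
  -- hcon : ∀ e, 0 < y e → 0 < κ (s e) → ∃ r, 0 < y r - ite ∧ ¬ GoodL ...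
  have exists_base : ∀ ℓ, GoodL s d y κ ℓ → 0 < κ ℓ ∨ ∃ e, 0 < y e ∧ 0 < κ (s e) := by
    intro ℓ hG
    induction hG with
    | base m h0 => exact Or.inl h0
    | step r hg hy ih =>
      rcases ih with h | h
      · exact Or.inr ⟨r, hy, h⟩
      · exact Or.inr h
  obtain ⟨e, he, hκe⟩ : ∃ e, 0 < y e ∧ 0 < κ (s e) := by
    rcases exists_base _ (inv r₀ hr₀) with h | h
    · exact ⟨r₀, hr₀, h⟩
    · exact h
  set y' : R → ℕ := fun r => y r - if r = e then 1 else 0 with hy'def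
  set κ₁ : L → ℕ := fun ℓ => κ ℓ + (if ℓ = d e then 1 else 0) - (if ℓ = s e then 1 else 0)
    with hκ₁def
  obtain ⟨rb, hrb, hrbG⟩ := hcon e he hκe
  have hy'le : ∀ r, y' r ≤ y r := fun r => Nat.sub_le _ _
  have hyrb : 0 < y rb := lt_of_lt_of_le hrb (hy'le rb)
  have hGb : GoodL s d y' κ₁ (d e) := by
    apply GoodL.base
    show 0 < κ (d e) + (if d e = d e then 1 else 0) - (if d e = s e then 1 else 0)
    by_cases h : d e = s e
    · rw [h]; simpa [h] using hκe
    · simp [h]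
  -- T : descending facts about locations that lost goodness
  have hT : ∀ ℓ, GoodL s d y κ ℓ → ¬ GoodL s d y' κ₁ ℓ →
      (GoodL s d y' (fun m => if m = s e then 1 else 0) ℓ ∧ κ (s e) = 1 ∧ d e ≠ s e) := by
    intro ℓ hG
    induction hG with
    | base m h0 =>
      intro hN
      have hκ1m : κ₁ m = 0 := by
        by_contra h
        exact hN (GoodL.base m (Nat.pos_of_ne_zero h))
      have hms : m = s e := by
        by_contra h
        have : κ₁ m = κ m + (if m = d e then 1 else 0) := by simp [hκ₁def, h]
        omega
      subst hms
      have hds : d e ≠ s e := by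
        intro h
        have h2 : κ₁ (s e) = κ (s e) := by simp [hκ₁def, h]
        omega
      have hκa : κ (s e) = 1 := by
        have hne : s e ≠ d e := fun hh => hds hh.symm
        have h2 : κ₁ (s e) = κ (s e) - 1 := by simp [hκ₁def, hne]
        omega
      exact ⟨GoodL.base _ (by simp), hκa, hds⟩
    | step r hg hy ih =>
      intro hN
      by_cases hGs : GoodL s d y' κ₁ (s r)
      · have hy'r : y' r = 0 := by
          by_contra h
          exact hN (GoodL.step r hGs (Nat.pos_of_ne_zero h))
        have hre : r = e := by
          by_contra h
          simp [hy'def, h] at hy'r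
          omega
        rw [hre] at hN
        exact absurd hGb hN
      · obtain ⟨hreach, hκa, hba⟩ := ih hGs
        have hre : r ≠ e := by
          intro h
          rw [h] at hN
          exact hN hGb
        have hpos : 0 < y' r := by simp [hy'def, hre]; exact hy
        exact ⟨GoodL.step r hreach hpos, hκa, hba⟩
  obtain ⟨hreach_rb, hκa1, hba⟩ := hT _ (inv rb hyrb) hrbG
  -- the source of e is not good after firing e
  have hNa : ¬ GoodL s d y' κ₁ (s e) := by
    intro hGa
    have lift : ∀ ℓ, GoodL s d y' (fun m => if m = s e then 1 else 0) ℓ →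
        GoodL s d y' κ₁ ℓ := by
      intro ℓ h
      induction h with
      | base m h0 =>
        have hm : m = s e := by by_contra h'; simp [h'] at h0
        exact hm ▸ hGa
      | step r hg hy ih => exact GoodL.step r ih hy
    exact hrbG (lift _ hreach_rb)
  -- extract a rule g with positive residual count leaving s e
  obtain ⟨g, hgpos, hsg⟩ : ∃ g, 0 < y' g ∧ s g = s e := by
    have descend : ∀ ℓ, GoodL s d y' (fun m => if m = s e then 1 else 0) ℓ →
        ℓ = s e ∨ ∃ g, 0 < y' g ∧ s g = s e := by
      intro ℓ h
      induction h with
      | base m h0 => left; by_contra h'; simp [h'] at h0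
      | step r hg hy ih =>
        rcases ih with h | h
        · exact Or.inr ⟨r, hy, h⟩
        · exact Or.inr h
    rcases descend _ hreach_rb with h | h
    · exact ⟨rb, hrb, h⟩
    · exact h
  -- the set of locations that are not good after firing e
  set Λ : Finset L := Finset.univ.filter (fun ℓ => ¬ GoodL s d y' κ₁ ℓ) with hΛdef
  have hmemΛ : ∀ ℓ, ℓ ∈ Λ ↔ ¬ GoodL s d y' κ₁ ℓ := by
    intro ℓ; simp [hΛdef]
  have hκ₁Λ : ∀ ℓ ∈ Λ, κ₁ ℓ = 0 := by
    intro ℓ h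
    by_contra h'
    exact (hmemΛ ℓ).mp h (GoodL.base ℓ (Nat.pos_of_ne_zero h'))
  have hintoΛ : ∀ r, 0 < y' r → d r ∈ Λ → s r ∈ Λ := by
    intro r h hd
    rw [hmemΛ] at hd ⊢
    intro hGs
    exact hd (GoodL.step r hGs h)
  have flow' : ∀ ℓ, (κ' ℓ : ℤ) - κ₁ ℓ =
      (∑ r, if d r = ℓ then (y' r : ℤ) else 0) - ∑ r, if s r = ℓ then (y' r : ℤ) else 0 :=
    flow_step s d e he hκe flow
  -- swap sums over Λ
  have hswap : ∀ f : R → L,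
      (∑ ℓ ∈ Λ, ∑ r, if f r = ℓ then (y' r : ℤ) else 0)
        = ∑ r, if f r ∈ Λ then (y' r : ℤ) else 0 := by
    intro f
    rw [Finset.sum_comm]
    refine Finset.sum_congr rfl (fun r _ => ?_)
    rw [Finset.sum_ite_eq Λ (f r) (fun _ => (y' r : ℤ))]
  have hterm : ∀ r, (if d r ∈ Λ then (y' r : ℤ) else 0) ≤ (if s r ∈ Λ then (y' r : ℤ) else 0) := by
    intro r
    by_cases hd : d r ∈ Λ
    · rcases Nat.eq_zero_or_pos (y' r) with h0 | h0
      · simp [h0]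
      · simp [hd, hintoΛ r h0 hd]
    · simp [hd]
      split <;> positivity
  have hsumflow : ∑ ℓ ∈ Λ, (κ' ℓ : ℤ) =
      (∑ r, if d r ∈ Λ then (y' r : ℤ) else 0) - ∑ r, if s r ∈ Λ then (y' r : ℤ) else 0 := by
    have h1 : ∑ ℓ ∈ Λ, (κ' ℓ : ℤ) = ∑ ℓ ∈ Λ, ((κ' ℓ : ℤ) - κ₁ ℓ) := by
      refine Finset.sum_congr rfl (fun ℓ h => ?_)
      rw [hκ₁Λ ℓ h]; simp
    rw [h1, Finset.sum_congr rfl (fun ℓ _ => flow' ℓ), Finset.sum_sub_distrib,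
      hswap d, hswap s]
  have hsums_eq : (∑ r, if d r ∈ Λ then (y' r : ℤ) else 0)
      = ∑ r, if s r ∈ Λ then (y' r : ℤ) else 0 := by
    have hle := Finset.sum_le_sum (fun r (_ : r ∈ Finset.univ) => hterm r)
    have hge : (0 : ℤ) ≤ ∑ ℓ ∈ Λ, (κ' ℓ : ℤ) :=
      Finset.sum_nonneg (fun ℓ _ => by positivity)
    omega
  have hκ'Λ : ∀ ℓ ∈ Λ, κ' ℓ = 0 := by
    have h0 : ∑ ℓ ∈ Λ, (κ' ℓ : ℤ) = 0 := by omega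
    intro ℓ h
    have := (Finset.sum_eq_zero_iff_of_nonneg
      (fun ℓ (_ : ℓ ∈ Λ) => by positivity)).mp h0 ℓ h
    exact_mod_cast this
  have htermeq : ∀ r, (if d r ∈ Λ then (y' r : ℤ) else 0) = (if s r ∈ Λ then (y' r : ℤ) else 0) := by
    have h2 := (Finset.sum_eq_sum_iff_of_le (fun r (_ : r ∈ Finset.univ) => hterm r)).mp hsums_eq
    intro r
    exact h2 r (Finset.mem_univ r)
  have houtΛ : ∀ r, 0 < y' r → s r ∈ Λ → d r ∈ Λ := by
    intro r h hs
    have := htermeq r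
    rw [if_pos hs] at this
    by_contra hd
    rw [if_neg hd] at this
    omega
  have hbalance : ∀ ℓ ∈ Λ, (∑ r, if d r = ℓ then (y' r : ℤ) else 0)
      = ∑ r, if s r = ℓ then (y' r : ℤ) else 0 := by
    intro ℓ h
    have hf := flow' ℓ
    rw [hκ₁Λ ℓ h, hκ'Λ ℓ h] at hf
    push_cast at hf
    linarith
  have haΛ : s e ∈ Λ := (hmemΛ _).mpr hNa
  -- now consider firing g instead of e
  set y'' : R → ℕ := fun r => y r - if r = g then 1 else 0 with hy''def
  set κ₂ : L → ℕ := fun ℓ => κ ℓ + (if ℓ = d g then 1 else 0) - (if ℓ = s g then 1 else 0)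
    with hκ₂def
  have hyg : 0 < y g := lt_of_lt_of_le hgpos (hy'le g)
  have hκsg : 0 < κ (s g) := by rw [hsg]; omega
  -- Euler argument: s e is good after firing g
  have hEuler : GoodL s d y'' κ₂ (s e) := by
    by_cases hc : d g = s g
    · apply GoodL.base
      show 0 < κ (s e) + (if s e = d g then 1 else 0) - (if s e = s g then 1 else 0)
      rw [if_pos (hc.trans hsg).symm, if_pos hsg.symm]
      omega
    · rw [hsg] at hc
      by_contra hnG
      set S : Finset L := Λ.filter (fun ℓ => GoodL s d y'' κ₂ ℓ) with hSdef
      have hmemS : ∀ ℓ, ℓ ∈ S ↔ (ℓ ∈ Λ ∧ GoodL s d y'' κ₂ ℓ) := by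
        intro ℓ; simp [hSdef]
      have hcS : d g ∈ S := by
        rw [hmemS]
        constructor
        · exact houtΛ g hgpos (hsg ▸ haΛ)
        · apply GoodL.base
          show 0 < κ (d g) + (if d g = d g then 1 else 0) - (if d g = s g then 1 else 0)
          simp [hsg, hc]
      have haS : s g ∉ S := by
        rw [hmemS, hsg]
        intro ⟨_, h⟩
        exact hnG h
      have hStermle : ∀ r, (if s r ∈ S then (y' r : ℤ) else 0) ≤ (if d r ∈ S then (y' r : ℤ) else 0) := by
        intro r
        by_cases hs : s r ∈ S
        · rcases Nat.eq_zero_or_pos (y' r) with h0 | h0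
          · simp [h0]
          · have hrg : r ≠ g := by
              intro h
              rw [h] at hs
              exact haS hs
            obtain ⟨hsΛ, hsW⟩ := (hmemS _).mp hs
            have hdS : d r ∈ S := by
              rw [hmemS]
              refine ⟨houtΛ r h0 hsΛ, ?_⟩
              have hy''r : 0 < y'' r := by
                have he1 : y'' r = y r := by simp [hy''def, hrg]
                have he2 := hy'le r
                omega
              exact GoodL.step r hsW hy''r
            simp [hs, hdS]
        · simp [hs]
          split <;> positivity
      have hSbal : (∑ r, if d r ∈ S then (y' r : ℤ) else 0)
          = ∑ r, if s r ∈ S then (y' r : ℤ) else 0 := by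
        have h1 : ∀ f : R → L,
            (∑ ℓ ∈ S, ∑ r, if f r = ℓ then (y' r : ℤ) else 0)
              = ∑ r, if f r ∈ S then (y' r : ℤ) else 0 := by
          intro f
          rw [Finset.sum_comm]
          refine Finset.sum_congr rfl (fun r _ => ?_)
          rw [Finset.sum_ite_eq S (f r) (fun _ => (y' r : ℤ))]
        rw [← h1 d, ← h1 s]
        refine Finset.sum_congr rfl (fun ℓ h => ?_)
        exact hbalance ℓ ((hmemS ℓ).mp h).1
      have htermeqS := (Finset.sum_eq_sum_iff_of_le
        (fun r (_ : r ∈ Finset.univ) => hStermle r)).mp hSbal.symm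
      have h2 := htermeqS g (Finset.mem_univ g)
      rw [if_neg haS, if_pos hcS] at h2
      omega
  -- transfer all good locations across firing g
  have htrans : ∀ ℓ, GoodL s d y κ ℓ → GoodL s d y'' κ₂ ℓ := by
    intro ℓ h
    induction h with
    | base m h0 =>
      by_cases hm : m = s g
      · rw [hm, hsg]; exact hEuler
      · apply GoodL.base
        show 0 < κ m + (if m = d g then 1 else 0) - (if m = s g then 1 else 0)
        simp [hm]
        omega
    | step r hg2 hy2 ih =>
      by_cases hrg : r = g
      · rw [hrg]
        apply GoodL.base
        show 0 < κ (d g) + (if d g = d g then 1 else 0) - (if d g = s g then 1 else 0)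
        by_cases h : d g = s g
        · rw [h]; simp [h]; omega
        · simp [h]
      · have hy''r : 0 < y'' r := by
          have : y'' r = y r := by simp [hy''def, hrg]
          omega
        exact GoodL.step r ih hy''r
  obtain ⟨rb2, hrb2, hrb2G⟩ := hcon g hyg hκsg
  have : 0 < y rb2 := lt_of_lt_of_le hrb2 (Nat.sub_le _ _)
  exact hrb2G (htrans _ (inv rb2 this))

end SteadyAux

open Classical in
/-- The number of occurrences of `r` in `τ`. -/
noncomputable def cnt {R : Type} (τ : List R) (r : R) : ℕ :=
  τ.countP (fun x => decide (x = r))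

theorem cnt_nil {R : Type} (r : R) : cnt [] r = 0 := rfl

open Classical in
theorem cnt_cons {R : Type} (a : R) (l : List R) (r : R) :
    cnt (a :: l) r = cnt l r + (if a = r then 1 else 0) := by
  simp [cnt, List.countP_cons]

open Classical in
theorem cnt_append {R : Type} (l l' : List R) (r : R) :
    cnt (l ++ l') r = cnt l r + cnt l' r := by
  simp [cnt, List.countP_append]

open Classical in
theorem cnt_pos {R : Type} (l : List R) (r : R) : 0 < cnt l r ↔ r ∈ l := by
  simp only [cnt, List.countP_pos_iff]
  constructor
  · rintro ⟨a, ha, h⟩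
    simp at h
    exact h ▸ ha
  · intro h
    exact ⟨r, h, by simp⟩

section TAP

variable [Fintype P] [DecidableEq L] (ta : TA L V P R)

theorem TA.apply_p (σ : Config L V P) (τ : List R) : (ta.apply σ τ).p = σ.p := by
  induction τ generalizing σ with
  | nil => rfl
  | cons e τ ih => exact ih _

theorem TA.apply_append (σ : Config L V P) (τ τ' : List R) :
    ta.apply σ (τ ++ τ') = ta.apply (ta.apply σ τ) τ' := by
  induction τ generalizing σ with
  | nil => rfl
  | cons e τ ih => simp [TA.apply, ih]

theorem TA.applicable_append (σ : Config L V P) (τ τ' : List R) :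
    ta.applicable σ (τ ++ τ') ↔ ta.applicable σ τ ∧ ta.applicable (ta.apply σ τ) τ' := by
  induction τ generalizing σ with
  | nil => simp [TA.applicable, TA.apply]
  | cons e τ ih => simp [TA.applicable, TA.apply, ih, and_assoc]

theorem TA.self_mem_visited (σ : Config L V P) (τ : List R) : σ ∈ ta.visited σ τ := by
  cases τ <;> simp [TA.visited]

theorem TA.apply_mem_visited (σ : Config L V P) (τ : List R) :
    ta.apply σ τ ∈ ta.visited σ τ := by
  induction τ generalizing σ with
  | nil => simp [TA.visited, TA.apply]
  | cons e τ ih => simp [TA.visited, TA.apply]; right; exact ih _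

theorem TA.holds_iff_of_context_eq {σ₁ σ₂ : Config L V P} {φ : TGuard V P}
    (h : ta.context σ₁ = ta.context σ₂) (hφ : φ ∈ ta.guards) :
    φ.holds σ₁.g σ₁.p ↔ φ.holds σ₂.g σ₂.p := by
  have h' := Set.ext_iff.mp h φ
  simp only [TA.context, Set.mem_setOf_eq, hφ, true_and] at h'
  cases hb : φ.isRise
  · simp only [hb] at h'
    simp only [Bool.false_eq_true, if_false] at h'
    exact not_iff_not.mp h'
  · simpa [hb] using h'

theorem TGuard.holds_mono_rise {φ : TGuard V P} {g1 g2 : V → ℕ} {p : P → ℕ}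
    (hr : φ.isRise = true) (hg : ∀ v, g1 v ≤ g2 v) (h : φ.holds g1 p) : φ.holds g2 p := by
  simp only [TGuard.holds, hr, if_true] at h ⊢
  exact le_trans h (by exact_mod_cast hg φ.var)

theorem TGuard.holds_fall_anti {φ : TGuard V P} {g1 g2 : V → ℕ} {p : P → ℕ}
    (hr : φ.isRise = false) (hg : ∀ v, g1 v ≤ g2 v) (h : φ.holds g2 p) : φ.holds g1 p := by
  simp only [TGuard.holds, hr, Bool.false_eq_true, if_false] at h ⊢
  exact lt_of_le_of_lt (by exact_mod_cast hg φ.var) h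

theorem TA.chainTo_iff {y : R → ℕ} {σ : Config L V P} {r : R} :
    ta.chainTo y σ r ↔ (0 < y r ∧
      GoodL (fun r' => (ta.rule r').src) (fun r' => (ta.rule r').dst) y σ.κ ((ta.rule r).src)) := by
  constructor
  · rintro ⟨c, hne, hpos, hhead, hchain, hlast⟩
    have hyr : 0 < y r := hlast ▸ hpos _ (List.getLast_mem hne)
    refine ⟨hyr, ?_⟩
    have aux : ∀ c : List R, ∀ hne : c ≠ [], (∀ r' ∈ c, 0 < y r') →
        GoodL (fun r' => (ta.rule r').src) (fun r' => (ta.rule r').dst) y σ.κ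
          ((ta.rule (c.head hne)).src) →
        List.Chain' (fun a b => (ta.rule a).dst = (ta.rule b).src) c →
        GoodL (fun r' => (ta.rule r').src) (fun r' => (ta.rule r').dst) y σ.κ
          ((ta.rule (c.getLast hne)).src) := by
      intro c
      induction c with
      | nil => intro h; exact absurd rfl h
      | cons x xs ih =>
        intro hne hpos2 hhd hch
        cases xs with
        | nil => simpa using hhd
        | cons z zs =>
          obtain ⟨h1, h2⟩ := List.isChain_cons_cons.mp hch
          have hstep : GoodL (fun r' => (ta.rule r').src) (fun r' => (ta.rule r').dst) y σ.κ
              ((ta.rule z).src) := by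
            rw [← h1]
            exact GoodL.step x (by simpa using hhd) (hpos2 x (by simp))
          have h3 := ih (by simp) (fun r' h => hpos2 r' (by simp [h])) (by simpa using hstep) h2
          rw [List.getLast_cons (by simp : (z :: zs) ≠ [])]
          exact h3
    have h4 := aux c hne hpos (GoodL.base _ hhead) hchain
    rw [hlast] at h4
    exact h4
  · rintro ⟨hyr, hgood⟩
    have aux2 : ∀ ℓ, GoodL (fun r' => (ta.rule r').src) (fun r' => (ta.rule r').dst) y σ.κ ℓ →
        ∀ r' : R, (ta.rule r').src = ℓ → 0 < y r' → ta.chainTo y σ r' := by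
      intro ℓ h
      induction h with
      | base m h0 =>
        intro r' hr hyr'
        exact ⟨[r'], by simp, by simpa using hyr', by simpa [hr] using h0, List.isChain_singleton r', by simp⟩
      | step rr hg hy ih =>
        intro r' hr hyr'
        obtain ⟨c, hne, hpos, hhead, hchain, hlast⟩ := ih rr rfl hy
        refine ⟨c ++ [r'], by simp, ?_, ?_, ?_, ?_⟩
        · intro r'' h
          rcases List.mem_append.mp h with h | h
          · exact hpos r'' h
          · rw [List.mem_singleton.mp h]; exact hyr'
        · rw [List.head_append_left hne]
          exact hhead
        · show List.IsChain _ _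
          rw [List.isChain_append]
          refine ⟨hchain, List.isChain_singleton r', ?_⟩
          intro x hx yy hyy
          rw [List.getLast?_eq_getLast_of_ne_nil hne, Option.mem_some_iff] at hx
          simp only [List.head?_cons, Option.mem_some_iff] at hyy
          rw [← hx, ← hyy] at *
          rw [hlast]
          exact hr.symm
        · exact List.getLast_append_singleton c
    exact aux2 _ hgood r rfl hyr

end TAP

theorem sum_cnt_cons [Fintype R] [DecidableEq L] [DecidableEq R]
    (f : R → L) (e : R) (τ : List R) (ℓ : L) :
    (∑ r, if f r = ℓ then (cnt (e :: τ) r : ℤ) else 0)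
      = (∑ r, if f r = ℓ then (cnt τ r : ℤ) else 0) + (if f e = ℓ then 1 else 0) := by
  have h1 : ∀ r : R, (if f r = ℓ then (cnt (e :: τ) r : ℤ) else 0)
      = (if f r = ℓ then (cnt τ r : ℤ) else 0)
        + (if f r = ℓ then (if e = r then (1 : ℤ) else 0) else 0) := by
    intro r
    rw [cnt_cons]
    by_cases h : f r = ℓ <;> by_cases h2 : e = r <;> simp [h, h2]
  rw [Finset.sum_congr rfl (fun r _ => h1 r), Finset.sum_add_distrib]
  congr 1
  rw [Finset.sum_eq_single e]
  · simp
  · intro b _ hb; simp [Ne.symm hb]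
  · intro h; exact absurd (Finset.mem_univ e) h

theorem sum_cnt_cons_mul [Fintype R] [DecidableEq R] (u : R → ℤ) (e : R) (τ : List R) :
    (∑ r, (cnt (e :: τ) r : ℤ) * u r) = (∑ r, (cnt τ r : ℤ) * u r) + u e := by
  have h1 : ∀ r : R, (cnt (e :: τ) r : ℤ) * u r
      = (cnt τ r : ℤ) * u r + (if e = r then (1 : ℤ) else 0) * u r := by
    intro r
    rw [cnt_cons]
    by_cases h2 : e = r <;> simp [h2] <;> ring
  rw [Finset.sum_congr rfl (fun r _ => h1 r), Finset.sum_add_distrib]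
  congr 1
  rw [Finset.sum_eq_single e]
  · simp
  · intro b _ hb; simp [Ne.symm hb]
  · intro h; exact absurd (Finset.mem_univ e) h

section TAP2

variable [Fintype P] [DecidableEq L] [Fintype R] (ta : TA L V P R)

theorem TA.fire_kappa (e : R) (σ : Config L V P) (h0 : 0 < σ.κ (ta.rule e).src) (ℓ : L) :
    (((ta.rule e).fire σ).κ ℓ : ℤ) - σ.κ ℓ =
      (if (ta.rule e).dst = ℓ then 1 else 0) - (if (ta.rule e).src = ℓ then 1 else 0) := by
  show ((σ.κ ℓ + (if ℓ = (ta.rule e).dst then 1 else 0)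
      - (if ℓ = (ta.rule e).src then 1 else 0) : ℕ) : ℤ) - σ.κ ℓ = _
  have hf1 : (if (ta.rule e).dst = ℓ then (1 : ℤ) else 0) = if ℓ = (ta.rule e).dst then 1 else 0 := by
    by_cases h : ℓ = (ta.rule e).dst <;> simp [h, eq_comm]
  have hf2 : (if (ta.rule e).src = ℓ then (1 : ℤ) else 0) = if ℓ = (ta.rule e).src then 1 else 0 := by
    by_cases h : ℓ = (ta.rule e).src <;> simp [h, eq_comm]
  rw [hf1, hf2]
  by_cases h2 : ℓ = (ta.rule e).src
  · subst h2
    by_cases h1 : (ta.rule e).src = (ta.rule e).dst <;> simp [h1] <;> omega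
  · by_cases h1 : ℓ = (ta.rule e).dst
    · subst h1
      simp [h2] <;> omega
    · simp [h1, h2]

theorem TA.flow_kappa [DecidableEq R] : ∀ (τ : List R) (σ : Config L V P), ta.applicable σ τ →
    ∀ ℓ, ((ta.apply σ τ).κ ℓ : ℤ) - σ.κ ℓ =
      (∑ r, if (ta.rule r).dst = ℓ then (cnt τ r : ℤ) else 0) -
       ∑ r, if (ta.rule r).src = ℓ then (cnt τ r : ℤ) else 0 := by
  intro τ
  induction τ with
  | nil => intro σ _ ℓ; simp [TA.apply, cnt_nil]
  | cons e τ ih =>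
    intro σ happ ℓ
    obtain ⟨hen, happ'⟩ := happ
    have hfire := ta.fire_kappa e σ hen.1 ℓ
    have hind := ih ((ta.rule e).fire σ) happ' ℓ
    rw [sum_cnt_cons (fun r => (ta.rule r).dst) e τ ℓ, sum_cnt_cons (fun r => (ta.rule r).src) e τ ℓ]
    show ((ta.apply ((ta.rule e).fire σ) τ).κ ℓ : ℤ) - σ.κ ℓ = _
    linarith

theorem TA.flow_g [DecidableEq R] : ∀ (τ : List R) (σ : Config L V P),
    ∀ z, ((ta.apply σ τ).g z : ℤ) - σ.g z = ∑ r, (cnt τ r : ℤ) * ((ta.rule r).upd z : ℤ) := by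
  intro τ
  induction τ with
  | nil => intro σ z; simp [TA.apply, cnt_nil]
  | cons e τ ih =>
    intro σ z
    have hind := ih ((ta.rule e).fire σ) z
    have hfire : (((ta.rule e).fire σ).g z : ℤ) = σ.g z + (ta.rule e).upd z := by
      show ((σ.g z + (ta.rule e).upd z : ℕ) : ℤ) = _
      push_cast
      ring
    rw [sum_cnt_cons_mul (fun r => ((ta.rule r).upd z : ℤ)) e τ]
    show ((ta.apply ((ta.rule e).fire σ) τ).g z : ℤ) - σ.g z = _
    linarith

theorem TA.forward_chain [DecidableEq R] : ∀ (τ : List R) (σ : Config L V P), ta.applicable σ τ →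
    (∀ ℓ, 0 < (ta.apply σ τ).κ ℓ →
      GoodL (fun r' => (ta.rule r').src) (fun r' => (ta.rule r').dst) (cnt τ) σ.κ ℓ) ∧
    (∀ r ∈ τ, GoodL (fun r' => (ta.rule r').src) (fun r' => (ta.rule r').dst) (cnt τ) σ.κ
      ((ta.rule r).src)) := by
  intro τ
  induction τ using List.reverseRecOn with
  | nil =>
    intro σ _
    constructor
    · intro ℓ h; exact GoodL.base ℓ (by simpa [TA.apply] using h)
    · simp
  | append_singleton τ e ih =>
    intro σ happ
    rw [ta.applicable_append] at happ
    obtain ⟨h1, h2⟩ := happ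
    have hen : (ta.rule e).enabledAt (ta.apply σ τ) := h2.1
    obtain ⟨ihℓ, ihr⟩ := ih σ h1
    have hmono : ∀ r, cnt τ r ≤ cnt (τ ++ [e]) r := by
      intro r; rw [cnt_append]; omega
    have hGs : GoodL (fun r' => (ta.rule r').src) (fun r' => (ta.rule r').dst)
        (cnt (τ ++ [e])) σ.κ ((ta.rule e).src) :=
      GoodL.mono _ _ hmono (ihℓ _ hen.1)
    have hcnt_e : 0 < cnt (τ ++ [e]) e := by rw [cnt_pos]; simp
    constructor
    · intro ℓ hκ
      rw [ta.apply_append] at hκ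
      simp only [TA.apply] at hκ
      by_cases hd : ℓ = (ta.rule e).dst
      · rw [hd]
        exact GoodL.step e hGs hcnt_e
      · have hpos : 0 < (ta.apply σ τ).κ ℓ := by
          have heq : (((ta.rule e).fire (ta.apply σ τ)).κ ℓ) = (ta.apply σ τ).κ ℓ
              + (if ℓ = (ta.rule e).dst then 1 else 0)
              - (if ℓ = (ta.rule e).src then 1 else 0) := rfl
          rw [heq, if_neg hd] at hκ
          omega
        exact GoodL.mono _ _ hmono (ihℓ ℓ hpos)
    · intro r hr
      rcases List.mem_append.mp hr with h | h
      · exact GoodL.mono _ _ hmono (ihr r h)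
      · rw [List.mem_singleton.mp h]
        exact hGs

theorem TA.forward_guards : ∀ (τ : List R) (σ : Config L V P), ta.applicable σ τ →
    ta.steady σ τ → ∀ r ∈ τ, ∀ φ ∈ (ta.rule r).guard, φ.holds σ.g σ.p := by
  intro τ
  induction τ with
  | nil => intro σ _ _ r hr; exact absurd hr List.not_mem_nil
  | cons e τ ih =>
    intro σ happ hst r hr φ hφ
    obtain ⟨hen, happ'⟩ := happ
    rcases List.mem_cons.mp hr with h | h
    · subst h; exact hen.2 φ hφ
    · have hmem : (ta.rule e).fire σ ∈ ta.visited σ (e :: τ) := by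
        simp only [TA.visited]
        exact List.mem_cons_of_mem _ (ta.self_mem_visited _ τ)
      have hctx : ta.context ((ta.rule e).fire σ) = ta.context σ := hst _ hmem
      have hst' : ta.steady ((ta.rule e).fire σ) τ := by
        intro σ'' h''
        have hmem'' : σ'' ∈ ta.visited σ (e :: τ) := by
          simp only [TA.visited]
          exact List.mem_cons_of_mem _ h''
        exact (hst σ'' hmem'').trans hctx.symm
      have hh := ih ((ta.rule e).fire σ) happ' hst' r h φ hφ
      exact (ta.holds_iff_of_context_eq hctx ⟨r, hφ⟩).mp hh

theorem TA.context_between {σ σ₁ σ' : Config L V P} (hctx : ta.context σ = ta.context σ')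
    (h1 : ∀ v, σ.g v ≤ σ₁.g v) (h2 : ∀ v, σ₁.g v ≤ σ'.g v)
    (hp1 : σ₁.p = σ.p) (hp2 : σ'.p = σ.p) :
    ta.context σ₁ = ta.context σ := by
  ext φ
  simp only [TA.context, Set.mem_setOf_eq]
  refine and_congr_right fun hφ => ?_
  have hiff := ta.holds_iff_of_context_eq hctx hφ
  rw [hp2] at hiff
  have hmain : φ.holds σ₁.g σ₁.p ↔ φ.holds σ.g σ.p := by
    rw [hp1]
    cases hb : φ.isRise
    · constructor
      · intro h
        exact TGuard.holds_fall_anti hb h1 h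
      · intro h
        exact TGuard.holds_fall_anti hb h2 (hiff.mp h)
    · constructor
      · intro h
        by_contra hns
        have hns' : ¬ φ.holds σ'.g σ.p := fun hh => hns (hiff.mpr hh)
        exact hns' (TGuard.holds_mono_rise hb h2 h)
      · intro h
        exact TGuard.holds_mono_rise hb h1 h
  cases hb : φ.isRise <;> simp [hb, hmain]

theorem TA.backward [Fintype L] (σ' : Config L V P) :
    ∀ (n : ℕ) (y : R → ℕ) (σ : Config L V P),
    (∑ r, y r) = n → ta.witnessesSteady σ σ' y →
    ∃ τ, ta.applicable σ τ ∧ ta.steady σ τ ∧ ta.apply σ τ = σ' := by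
  classical
  intro n
  induction n using Nat.strong_induction_on with
  | _ n ih =>
  intro y σ hsum hw
  obtain ⟨hp, hctx, hflowκ, hflowg, hguards, hchains⟩ := hw
  by_cases h0 : ∀ r, y r = 0
  · have hσeq : σ = σ' := by
      have hκ : σ.κ = σ'.κ := by
        funext ℓ
        have hf := hflowκ ℓ
        simp [h0] at hf
        omega
      have hg : σ.g = σ'.g := by
        funext z
        have hf := hflowg z
        simp [h0] at hf
        omega
      cases σ; cases σ'
      simp_all
    refine ⟨[], trivial, ?_, hσeq⟩
    intro σ'' h''
    simp [TA.visited] at h''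
    rw [h'']
  · push_neg at h0
    obtain ⟨r₀, hr₀⟩ := h0
    have hinv : ∀ r, 0 < y r → GoodL (fun r' => (ta.rule r').src) (fun r' => (ta.rule r').dst)
        y σ.κ ((ta.rule r).src) := by
      intro r hr
      exact ((ta.chainTo_iff).mp (hchains r hr)).2
    obtain ⟨e, he, hκe, hkey⟩ := key_step (fun r' => (ta.rule r').src) (fun r' => (ta.rule r').dst)
      hflowκ hinv (Nat.pos_of_ne_zero hr₀)
    set σ₁ := (ta.rule e).fire σ with hσ₁def
    set y' : R → ℕ := fun r => y r - if r = e then 1 else 0 with hy'def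
    have henabled : (ta.rule e).enabledAt σ := ⟨hκe, hguards e he⟩
    have hp1 : σ₁.p = σ.p := rfl
    have hg1 : ∀ v, σ.g v ≤ σ₁.g v := fun v => Nat.le_add_right _ _
    have hg2 : ∀ v, σ₁.g v ≤ σ'.g v := by
      intro z
      have hf := hflowg z
      have hterm : ((ta.rule e).upd z : ℤ) ≤ (y e : ℤ) * ((ta.rule e).upd z : ℤ) := by
        have h1 : (1 : ℤ) ≤ (y e : ℤ) := by exact_mod_cast he
        nlinarith [Int.ofNat_nonneg ((ta.rule e).upd z)]
      have hsingle : (y e : ℤ) * ((ta.rule e).upd z : ℤ)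
          ≤ ∑ r, (y r : ℤ) * ((ta.rule r).upd z : ℤ) :=
        Finset.single_le_sum (f := fun r => (y r : ℤ) * ((ta.rule r).upd z : ℤ))
          (fun r _ => by positivity) (Finset.mem_univ e)
      have hfg : (σ₁.g z : ℤ) = σ.g z + (ta.rule e).upd z := by
        show ((σ.g z + (ta.rule e).upd z : ℕ) : ℤ) = _
        push_cast
        ring
      have : (σ₁.g z : ℤ) ≤ σ'.g z := by linarith
      exact_mod_cast this
    have hctxσ₁ : ta.context σ₁ = ta.context σ :=
      ta.context_between hctx hg1 hg2 hp1 hp.symm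
    have hw' : ta.witnessesSteady σ₁ σ' y' := by
      refine ⟨hp1.trans hp, hctxσ₁.trans hctx, ?_, ?_, ?_, ?_⟩
      · intro ℓ
        exact flow_step (fun r' => (ta.rule r').src) (fun r' => (ta.rule r').dst) e he hκe hflowκ ℓ
      · intro z
        have hs := sum_upd_sub (fun r => ((ta.rule r).upd z : ℤ)) e y he
        have hf := hflowg z
        have hfg : (σ₁.g z : ℤ) = σ.g z + (ta.rule e).upd z := by
          show ((σ.g z + (ta.rule e).upd z : ℕ) : ℤ) = _
          push_cast
          ring
        show (σ'.g z : ℤ) - (σ₁.g z : ℤ)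
            = ∑ r, ((y r - if r = e then 1 else 0 : ℕ) : ℤ) * ((ta.rule r).upd z : ℤ)
        rw [hs]
        linarith
      · intro r hr φ hφ
        have hyr : 0 < y r := lt_of_lt_of_le hr (Nat.sub_le _ _)
        have hholds := hguards r hyr φ hφ
        exact (ta.holds_iff_of_context_eq hctxσ₁ ⟨r, hφ⟩).mpr hholds
      · intro r hr
        rw [ta.chainTo_iff]
        exact ⟨hr, hkey r hr⟩
    have hsum' : (∑ r, y' r) < n := by
      have hsplit : ∀ r, y r = y' r + (if r = e then 1 else 0) := by
        intro r
        by_cases h : r = e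
        · rw [if_pos h, h]
          have h2 : y' e = y e - 1 := by simp [hy'def]
          omega
        · rw [if_neg h]
          simp [hy'def, h]
      have h1 : ∑ r, y r = (∑ r, y' r) + ∑ r, (if r = e then 1 else 0) := by
        rw [← Finset.sum_add_distrib]
        exact Finset.sum_congr rfl (fun r _ => hsplit r)
      have h2 : (∑ r : R, (if r = e then 1 else 0)) = 1 := by
        rw [Finset.sum_ite_eq' Finset.univ e (fun _ => 1)]
        simp
      omega
    obtain ⟨τ', happ', hst', happly'⟩ := ih _ hsum' y' σ₁ rfl hw'
    refine ⟨e :: τ', ⟨henabled, happ'⟩, ?_, happly'⟩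
    intro σ'' h''
    simp only [TA.visited] at h''
    rcases List.mem_cons.mp h'' with h | h
    · rw [h]
    · exact (hst' σ'' h).trans hctxσ₁

end TAP2

/-- There exists a steady schedule `τ` applicable to `σ` with `τ(σ) = σ'` if and only if
some assignment `y : R → ℕ` witnesses steady reachability from `σ` to `σ'`. -/
theorem steady_schedule_iff_witness [Fintype P] [DecidableEq L] [Fintype L] [Fintype R]
    (ta : TA L V P R) (σ σ' : Config L V P)
    (hσ : ta.validConfig σ) (hσ' : ta.validConfig σ') :
    (∃ τ : List R, ta.applicable σ τ ∧ ta.steady σ τ ∧ ta.apply σ τ = σ') ↔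
    (∃ y : R → ℕ, ta.witnessesSteady σ σ' y) := by
  classical
  constructor
  · rintro ⟨τ, happ, hst, happly⟩
    refine ⟨cnt τ, ?_, ?_, ?_, ?_, ?_, ?_⟩
    · rw [← happly, ta.apply_p]
    · exact (hst σ' (happly ▸ ta.apply_mem_visited σ τ)).symm
    · intro ℓ
      have h := ta.flow_kappa τ σ happ ℓ
      rw [happly] at h
      exact h
    · intro z
      have h := ta.flow_g τ σ z
      rw [happly] at h
      exact h
    · intro r hr φ hφ
      exact ta.forward_guards τ σ happ hst r ((cnt_pos τ r).mp hr) φ hφ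
    · intro r hr
      rw [ta.chainTo_iff]
      exact ⟨hr, (ta.forward_chain τ σ happ).2 r ((cnt_pos τ r).mp hr)⟩
  · rintro ⟨y, hw⟩
    exact ta.backward σ' (∑ r, y r) y σ rfl hw
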